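/- Let s, t be positive integers, a ≠ c ∈ [t], b, z ∈ [s], and let K be an s×s block matrix whose block entries are column vectors of length r. With R_{a,g} = I_{s^{t-a-1}} ⊗ e_g ⊗ I_{s^a}, one has (R_{a,b} ⊗ I_r)·Φ_{t,c}(K)·R_{a,z}^T = Φ_{t-1, c̃}(K) if b = z, and equals the zero matrix if b ≠ z, where c̃ = c if c < a and c̃ = c - 1 if c > a. -/

import Mathlib

open Matrix

/-- The row-selection matrix `R_{a,g}` (for `t = m+1` levels): it selects the rows of
`[s^t]` (indexed by their base-`s` digit strings) whose `a`-th digit equals `g`. -/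
def Rsel {F : Type*} [Field F] {s m : ℕ} (a : Fin (m + 1)) (g : Fin s) :
    Matrix (Fin m → Fin s) (Fin (m + 1) → Fin s) F :=
  Matrix.of fun f f' => if f' = Fin.insertNth a g f then 1 else 0

/-- `R_{a,g} ⊗ I_r`. -/
def RselKron {F : Type*} [Field F] {s m r : ℕ} (a : Fin (m + 1)) (g : Fin s) :
    Matrix ((Fin m → Fin s) × Fin r) ((Fin (m + 1) → Fin s) × Fin r) F :=
  Matrix.of fun p q => Rsel a g p.1 q.1 * (if p.2 = q.2 then 1 else 0)

/-- The blow-up `Φ_{t,a}(K)` of an `s × s` block matrix `K` whose blocks are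
column vectors of length `r`. -/
def blowUpVec {F : Type*} [Field F] {s r : ℕ} {t : ℕ} (a : Fin t)
    (K : Fin s → Fin s → Fin r → F) :
    Matrix ((Fin t → Fin s) × Fin r) (Fin t → Fin s) F :=
  Matrix.of fun p q =>
    if ∀ z, z ≠ a → p.1 z = q z then K (p.1 a) (q a) p.2 else 0

lemma entry_aux {F : Type*} [Field F] {s m r : ℕ}
    (a c : Fin (m + 1)) (b z : Fin s)
    (K : Fin s → Fin s → Fin r → F) (p : Fin m → Fin s) (j : Fin r) (q : Fin m → Fin s) :
    (((RselKron a b * blowUpVec c K : Matrix _ _ F) * (Rsel (F := F) a z)ᵀ :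
        Matrix ((Fin m → Fin s) × Fin r) (Fin m → Fin s) F) (p, j) q)
      = blowUpVec c K (a.insertNth b p, j) (a.insertNth z q) := by
  simp [Matrix.mul_apply, RselKron, Rsel, Fintype.sum_prod_type, mul_ite, ite_mul, mul_zero,
    zero_mul, mul_one, one_mul, Finset.sum_ite_eq, Finset.sum_ite_eq']
  erw [Matrix.mul_apply]
  simp [Matrix.mul_apply, RselKron, Rsel, Fintype.sum_prod_type, mul_ite, ite_mul, mul_zero,
    zero_mul, mul_one, one_mul, Finset.sum_ite_eq, Finset.sum_ite_eq']

theorem stmt9 {F : Type*} [Field F] {s m r : ℕ} (hs : 0 < s)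
    (a c : Fin (m + 1)) (hac : a ≠ c) (b z : Fin s)
    (K : Fin s → Fin s → Fin r → F) :
    (RselKron a b * blowUpVec c K : Matrix _ _ F) * (Rsel (F := F) a z)ᵀ =
      if b = z then
        blowUpVec (t := m) ⟨if (c : ℕ) < (a : ℕ) then (c : ℕ) else (c : ℕ) - 1, by
          have h1 := a.isLt
          have h2 := c.isLt
          have h3 : (a : ℕ) ≠ (c : ℕ) := fun hh => hac (Fin.ext hh)
          split <;> omega⟩ K
      else 0 := by
  have h3 : (a : ℕ) ≠ (c : ℕ) := fun hh => hac (Fin.ext hh)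
  set i : Fin m := ⟨if (c : ℕ) < (a : ℕ) then (c : ℕ) else (c : ℕ) - 1, by
    have h1 := a.isLt; have h2 := c.isLt; split <;> omega⟩ with hi
  have hsucc : a.succAbove i = c := by
    by_cases hca : (c : ℕ) < (a : ℕ)
    · rw [Fin.succAbove_of_castSucc_lt]
      · apply Fin.ext; simp [hi, hca]
      · rw [Fin.lt_def]; simp [hi, hca]
    · rw [Fin.succAbove_of_le_castSucc]
      · apply Fin.ext; simp [hi, hca]; omega
      · rw [Fin.le_def]; simp [hi, hca]; omega
  rcases eq_or_ne b z with rfl | hbz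
  · rw [if_pos rfl]
    ext ⟨p, j⟩ q
    rw [entry_aux]
    simp only [blowUpVec, Matrix.of_apply]
    have hval : ∀ (f : Fin m → Fin s),
        Fin.insertNth (α := fun _ => Fin s) a b f c = f i := by
      intro f; rw [← hsucc]; simp
    have hcond : (∀ w, w ≠ c →
          Fin.insertNth (α := fun _ => Fin s) a b p w =
          Fin.insertNth (α := fun _ => Fin s) a b q w) ↔
        (∀ w, w ≠ i → p w = q w) := by
      constructor
      · intro h w hw
        have hne : a.succAbove w ≠ c := by
          rw [← hsucc]; exact fun hh => hw (a.succAbove_right_injective hh)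
        have := h _ hne
        simpa using this
      · intro h w hw
        rcases eq_or_ne w a with rfl | hwa
        · simp
        · obtain ⟨w', rfl⟩ := Fin.exists_succAbove_eq hwa
          have hne : w' ≠ i := fun hh => hw (by rw [hh, hsucc])
          simp [h _ hne]
    rw [hval p, hval q]
    split
    · rename_i h; rw [if_pos (hcond.mp h)]
    · rename_i h; rw [if_neg (fun hh => h (hcond.mpr hh))]
  · rw [if_neg hbz]
    ext ⟨p, j⟩ q
    rw [entry_aux]
    have hnot : ¬ (∀ w, w ≠ c →
        Fin.insertNth (α := fun _ => Fin s) a b p w =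
        Fin.insertNth (α := fun _ => Fin s) a z q w) := by
      intro h
      have := h a (fun hh => hac hh)
      simp at this
      exact hbz this
    simp [blowUpVec, hnot]
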